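/- For a qubit-qudit system ℂ² ⊗ ℂ^{d} consider ρ = x₀₀|0,0⟩⟨0,0| + x₁₁|1,d−1⟩⟨1,d−1| + x₀₁|0,d−1⟩⟨1,0| + x₀₁*|1,0⟩⟨0,d−1| + Σ_{i,j=1}^{d−1} A_{ij}|0,i⟩⟨0,j| + Σ_{i,j=0}^{d−2} B_{ij}|1,i⟩⟨1,j|, with ρ positive semidefinite. Then the negative eigenvalues of ρ^Γ are exactly the negative eigenvalues of the 2×2 matrix [[x₀₀, x₀₁],[x₀₁*, x₁₁]], i.e., ρ is PPT iff x₀₀ x₁₁ ≥ |x₀₁|². -/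

import Mathlib

open Complex Matrix BigOperators
open scoped ComplexOrder

noncomputable section

def PT {dA dB : ℕ} (ρ : Matrix (Fin dA × Fin dB) (Fin dA × Fin dB) ℂ) :
    Matrix (Fin dA × Fin dB) (Fin dA × Fin dB) ℂ :=
  fun p q => ρ (p.1, q.2) (q.1, p.2)

/-- The qubit-qudit family (Eq. (29)):
`ρ = x₀₀|0,0⟩⟨0,0| + x₁₁|1,d−1⟩⟨1,d−1| + x₀₁|0,d−1⟩⟨1,0| + x₀₁*|1,0⟩⟨0,d−1|
  + Σ_{i,j=1}^{d−1} A_{ij}|0,i⟩⟨0,j| + Σ_{i,j=0}^{d−2} B_{ij}|1,i⟩⟨1,j|`. -/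
def ρ2d (d : ℕ) (x00 x11 : ℝ) (x01 : ℂ) (A B : ℕ → ℕ → ℂ) :
    Matrix (Fin 2 × Fin d) (Fin 2 × Fin d) ℂ :=
  fun p q =>
    (if (p.1 : ℕ) = 0 ∧ (p.2 : ℕ) = 0 ∧ (q.1 : ℕ) = 0 ∧ (q.2 : ℕ) = 0 then (x00 : ℂ) else 0) +
    (if (p.1 : ℕ) = 1 ∧ (p.2 : ℕ) = d - 1 ∧ (q.1 : ℕ) = 1 ∧ (q.2 : ℕ) = d - 1
      then (x11 : ℂ) else 0) +
    (if (p.1 : ℕ) = 0 ∧ (p.2 : ℕ) = d - 1 ∧ (q.1 : ℕ) = 1 ∧ (q.2 : ℕ) = 0 then x01 else 0) +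
    (if (p.1 : ℕ) = 1 ∧ (p.2 : ℕ) = 0 ∧ (q.1 : ℕ) = 0 ∧ (q.2 : ℕ) = d - 1
      then starRingEnd ℂ x01 else 0) +
    (if (p.1 : ℕ) = 0 ∧ (q.1 : ℕ) = 0 ∧ 1 ≤ (p.2 : ℕ) ∧ 1 ≤ (q.2 : ℕ)
      then A p.2 q.2 else 0) +
    (if (p.1 : ℕ) = 1 ∧ (q.1 : ℕ) = 1 ∧ (p.2 : ℕ) < d - 1 ∧ (q.2 : ℕ) < d - 1
      then B p.2 q.2 else 0)

open Polynomial in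
lemma aux_charpoly_conj {n : Type*} [Fintype n] [DecidableEq n] {R : Type*} [CommRing R]
    (U V M : Matrix n n R) (hUV : U * V = 1) :
    (U * M * V).charpoly = M.charpoly := by
  have hUV' : U.map (C : R →+* R[X]) * V.map (C : R →+* R[X]) = 1 := by
    rw [← Matrix.map_mul, hUV, Matrix.map_one _ (map_zero _) (map_one _)]
  have key : charmatrix (U * M * V)
      = U.map (C : R →+* R[X]) * charmatrix M * V.map (C : R →+* R[X]) := by
    rw [charmatrix, charmatrix, RingHom.mapMatrix_apply, RingHom.mapMatrix_apply,
      Matrix.map_mul, Matrix.map_mul, mul_sub, sub_mul]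
    congr 1
    rw [mul_assoc,
      (scalar_commute (X : R[X]) (fun r' => Commute.all _ _) (V.map (C : R →+* R[X]))).eq,
      ← mul_assoc, hUV', one_mul]
  have h1 : (U.map (C : R →+* R[X])).det * (V.map (C : R →+* R[X])).det = 1 := by
    rw [← det_mul, hUV', det_one]
  rw [Matrix.charpoly, Matrix.charpoly, key, det_mul, det_mul]
  linear_combination (charmatrix M).det * h1

open Polynomial in
lemma aux_charpoly_diagonal {n : Type*} [Fintype n] [DecidableEq n] {R : Type*} [CommRing R]
    (w : n → R) : (diagonal w).charpoly = ∏ i, (X - C (w i)) := by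
  have h : charmatrix (diagonal w) = diagonal fun i => (X : R[X]) - C (w i) := by
    ext i j
    by_cases h : i = j <;> simp [charmatrix_apply, diagonal_apply, h]
  rw [Matrix.charpoly, h, det_diagonal]

open Polynomial in
lemma aux_herm_roots {n : Type*} [Fintype n] [DecidableEq n] {M : Matrix n n ℂ}
    (hM : M.IsHermitian) :
    M.charpoly.roots = Finset.univ.val.map (fun i => ((hM.eigenvalues i : ℝ) : ℂ)) := by
  have h1 : M.charpoly = ((Finset.univ.val.map (fun i => ((hM.eigenvalues i : ℝ) : ℂ))).map
      (fun a => X - C a)).prod := by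
    conv_lhs => rw [hM.spectral_theorem]
    rw [Unitary.conjStarAlgAut_apply, aux_charpoly_conj _ _ _ ((Matrix.mem_unitaryGroup_iff).mp (hM.eigenvectorUnitary).2),
      aux_charpoly_diagonal, Multiset.map_map]
    rfl
  rw [h1, Polynomial.roots_multiset_prod_X_sub_C]

def splitIdx (d : ℕ) (hd : 2 ≤ d) : (Fin 2 ⊕ (Fin (d-1) ⊕ Fin (d-1))) ≃ (Fin 2 × Fin d) where
  toFun x :=
    match x with
    | Sum.inl i => if (i : ℕ) = 0 then (⟨0, by omega⟩, ⟨0, by omega⟩)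
        else (⟨1, by omega⟩, ⟨d-1, by omega⟩)
    | Sum.inr (Sum.inl i) => (⟨0, by omega⟩, ⟨(i : ℕ)+1, by have := i.isLt; omega⟩)
    | Sum.inr (Sum.inr j) => (⟨1, by omega⟩, ⟨(j : ℕ), by have := j.isLt; omega⟩)
  invFun p :=
    if (p.1 : ℕ) = 0 then
      (if h : (p.2 : ℕ) = 0 then Sum.inl ⟨0, by omega⟩
        else Sum.inr (Sum.inl ⟨(p.2 : ℕ)-1, by have := p.2.isLt; omega⟩))
    else
      (if h : (p.2 : ℕ) = d-1 then Sum.inl ⟨1, by omega⟩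
        else Sum.inr (Sum.inr ⟨(p.2 : ℕ), by have := p.2.isLt; omega⟩))
  left_inv := by
    have h10 : ¬((1:ℕ) = 0) := by omega
    rintro (⟨i, hi⟩ | ⟨i, hi⟩ | ⟨j, hj⟩)
    · interval_cases i
      · dsimp only; rw [if_pos rfl]; dsimp only; rw [if_pos rfl, dif_pos rfl]
      · dsimp only; rw [if_neg h10]; dsimp only
        rw [if_neg h10, dif_pos rfl]
    · dsimp only; rw [if_pos rfl, dif_neg (by omega)]
      simp
    · dsimp only; rw [if_neg h10, dif_neg (by omega)]
  right_inv := by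
    have h10 : ¬((1:ℕ) = 0) := by omega
    rintro ⟨⟨i, hi⟩, ⟨k, hk⟩⟩
    interval_cases i
    · dsimp only; rw [if_pos rfl]
      by_cases h : k = 0
      · rw [dif_pos h]; dsimp only; rw [if_pos rfl]
        subst h; rfl
      · rw [dif_neg h]; dsimp only
        ext <;> simp <;> omega
    · dsimp only; rw [if_neg h10]
      by_cases h : k = d - 1
      · rw [dif_pos h]; dsimp only; rw [if_neg h10]
        subst h; rfl
      · rw [dif_neg h]

set_option maxHeartbeats 1000000 in
lemma PT_block (d : ℕ) (hd : 2 ≤ d) (x00 x11 : ℝ) (x01 : ℂ) (A B : ℕ → ℕ → ℂ) :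
    (PT (ρ2d d x00 x11 x01 A B)).submatrix (splitIdx d hd) (splitIdx d hd) =
      fromBlocks !![(x00:ℂ), x01; starRingEnd ℂ x01, (x11:ℂ)] 0 0
        (fromBlocks (fun i j : Fin (d-1) => A ((j:ℕ)+1) ((i:ℕ)+1)) 0 0
          (fun i j : Fin (d-1) => B (j:ℕ) (i:ℕ))) := by
  ext x y
  rcases x with ⟨xi, hxi⟩ | ⟨i, hi⟩ | ⟨i, hi⟩ <;> rcases y with ⟨yj, hyj⟩ | ⟨j, hj⟩ | ⟨j, hj⟩
  all_goals try interval_cases xi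
  all_goals try interval_cases yj
  all_goals (
    dsimp only [submatrix_apply, splitIdx, Equiv.coe_fn_mk, PT, ρ2d, fromBlocks_apply₁₁,
      fromBlocks_apply₁₂, fromBlocks_apply₂₁, fromBlocks_apply₂₂, Matrix.zero_apply]
    try simp only [reduceIte, Nat.reduceEqDiff, true_and, and_true, false_and, and_false]
    try dsimp only
    try split_ifs
    all_goals (try (exfalso; omega))
    all_goals simp [Fin.mk_zero, Fin.mk_one, fromBlocks])

theorem qubit_qudit_negative_eigenvalues (d : ℕ) (hd : 2 ≤ d)
    (x00 x11 : ℝ) (x01 : ℂ) (A B : ℕ → ℕ → ℂ)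
    (hA : ∀ i j, A j i = starRingEnd ℂ (A i j))
    (hB : ∀ i j, B j i = starRingEnd ℂ (B i j))
    (hρ : (ρ2d d x00 x11 x01 A B).PosSemidef)
    (hΓ : (PT (ρ2d d x00 x11 x01 A B)).IsHermitian)
    (hX : (!![(x00 : ℂ), x01; starRingEnd ℂ x01, (x11 : ℂ)]).IsHermitian) :
    ((Finset.univ.val.map hΓ.eigenvalues).filter (fun t => t < 0) =
      (Finset.univ.val.map hX.eigenvalues).filter (fun t => t < 0)) ∧
    ((PT (ρ2d d x00 x11 x01 A B)).PosSemidef ↔ x00 * x11 ≥ ‖x01‖ ^ 2) := by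
  classical
  set X : Matrix (Fin 2) (Fin 2) ℂ := !![(x00 : ℂ), x01; starRingEnd ℂ x01, (x11 : ℂ)] with hXdef
  set ρ : Matrix (Fin 2 × Fin d) (Fin 2 × Fin d) ℂ := ρ2d d x00 x11 x01 A B with hρdef
  set A' : Matrix (Fin (d-1)) (Fin (d-1)) ℂ := fun i j => A ((j:ℕ)+1) ((i:ℕ)+1) with hA'def
  set B' : Matrix (Fin (d-1)) (Fin (d-1)) ℂ := fun i j => B (j:ℕ) (i:ℕ) with hB'def
  -- A' and B' are positive semidefinite (principal submatrices of ρ, transposed)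
  have hA'psd : A'.PosSemidef := by
    have h := (hρ.submatrix (fun i : Fin (d-1) =>
      ((⟨0, by omega⟩ : Fin 2), (⟨(i:ℕ)+1, by have := i.isLt; omega⟩ : Fin d)))).transpose
    convert h using 1
    · rfl
    ext i j
    have hi := i.isLt; have hj := j.isLt
    show A ((j:ℕ)+1) ((i:ℕ)+1) = ρ _ _
    rw [hρdef]
    dsimp only [ρ2d]
    rw [if_neg (by omega), if_neg (by omega), if_neg (by omega), if_neg (by omega),
      if_pos (by omega), if_neg (by omega)]
    ring
  have hB'psd : B'.PosSemidef := by
    have h := (hρ.submatrix (fun i : Fin (d-1) =>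
      ((⟨1, by omega⟩ : Fin 2), (⟨(i:ℕ), by have := i.isLt; omega⟩ : Fin d)))).transpose
    convert h using 1
    · rfl
    ext i j
    have hi := i.isLt; have hj := j.isLt
    show B (j:ℕ) (i:ℕ) = ρ _ _
    rw [hρdef]
    dsimp only [ρ2d]
    rw [if_neg (by omega), if_neg (by omega), if_neg (by omega), if_neg (by omega),
      if_neg (by omega), if_pos (by omega)]
    ring
  -- diagonal entries of ρ are nonnegative
  have hdiag : ∀ p, 0 ≤ ρ p p := fun p => by
    exact hρ.diag_nonneg
  have hx00 : 0 ≤ x00 := by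
    have h := hdiag ((⟨0, by omega⟩ : Fin 2), (⟨0, by omega⟩ : Fin d))
    rw [hρdef] at h
    dsimp only [ρ2d] at h
    rw [if_pos (by omega), if_neg (by omega), if_neg (by omega), if_neg (by omega),
      if_neg (by omega), if_neg (by omega)] at h
    simpa using Complex.zero_le_real.mp (by simpa using h)
  have hx11 : 0 ≤ x11 := by
    have h := hdiag ((⟨1, by omega⟩ : Fin 2), (⟨d-1, by omega⟩ : Fin d))
    rw [hρdef] at h
    dsimp only [ρ2d] at h
    rw [if_neg (by omega), if_pos (by omega), if_neg (by omega), if_neg (by omega),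
      if_neg (by omega), if_neg (by omega)] at h
    simpa using Complex.zero_le_real.mp (by simpa using h)
  -- charpoly of PT ρ factors
  have hblock := PT_block d hd x00 x11 x01 A B
  have hchar : (PT ρ).charpoly = X.charpoly * (A'.charpoly * B'.charpoly) := by
    have h1 : ((PT ρ).submatrix (splitIdx d hd) (splitIdx d hd)).charpoly
        = (PT ρ).charpoly := by
      have h2 := Matrix.charpoly_reindex (R := ℂ) (splitIdx d hd).symm (PT ρ)
      rw [← h2, reindex_apply, Equiv.symm_symm]
    rw [← h1, hblock, ← hA'def, ← hB'def, Matrix.charpoly_fromBlocks_zero₁₂, Matrix.charpoly_fromBlocks_zero₁₂]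
  -- the multiset of eigenvalues splits
  have key : (Finset.univ.val.map hΓ.eigenvalues) =
      (Finset.univ.val.map hX.eigenvalues) +
        ((Finset.univ.val.map hA'psd.1.eigenvalues) +
          (Finset.univ.val.map hB'psd.1.eigenvalues)) := by
    apply Multiset.map_injective (f := (fun r : ℝ => (r : ℂ))) Complex.ofReal_injective
    rw [Multiset.map_add, Multiset.map_add, Multiset.map_map, Multiset.map_map,
      Multiset.map_map, Multiset.map_map]
    have e1 := aux_herm_roots hΓ
    have e2 := aux_herm_roots hX
    have e3 := aux_herm_roots hA'psd.1
    have e4 := aux_herm_roots hB'psd.1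
    simp only [Function.comp_def]
    rw [← e1, ← e2, ← e3, ← e4, hchar,
      Polynomial.roots_mul (mul_ne_zero (Matrix.charpoly_monic _).ne_zero
        (mul_ne_zero (Matrix.charpoly_monic _).ne_zero (Matrix.charpoly_monic _).ne_zero)),
      Polynomial.roots_mul (mul_ne_zero (Matrix.charpoly_monic _).ne_zero
        (Matrix.charpoly_monic _).ne_zero)]
  have hfA : ((Finset.univ.val.map hA'psd.1.eigenvalues).filter (fun t => t < 0)) = 0 :=
    Multiset.filter_eq_nil.mpr (by
      intro a ha
      obtain ⟨i, _, rfl⟩ := Multiset.mem_map.mp ha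
      exact not_lt.mpr (hA'psd.eigenvalues_nonneg i))
  have hfB : ((Finset.univ.val.map hB'psd.1.eigenvalues).filter (fun t => t < 0)) = 0 :=
    Multiset.filter_eq_nil.mpr (by
      intro a ha
      obtain ⟨i, _, rfl⟩ := Multiset.mem_map.mp ha
      exact not_lt.mpr (hB'psd.eigenvalues_nonneg i))
  -- determinant and trace of X
  have hdetX : X.det = ((x00 * x11 - ‖x01‖ ^ 2 : ℝ) : ℂ) := by
    rw [hXdef, Matrix.det_fin_two_of, Complex.mul_conj, ← Complex.sq_norm]
    push_cast
    ring
  have htrX : X.trace = ((x00 + x11 : ℝ) : ℂ) := by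
    rw [hXdef, Matrix.trace_fin_two_of]
    push_cast
    ring
  have hRC : ∀ r : ℝ, (RCLike.ofReal r : ℂ) = (r : ℂ) := fun r => rfl
  have hXsum : hX.eigenvalues 0 + hX.eigenvalues 1 = x00 + x11 := by
    have h1 : X.trace = ∑ i, (hX.eigenvalues i : ℂ) := by
      conv_lhs => rw [hX.spectral_theorem]
      rw [Unitary.conjStarAlgAut_apply, Matrix.trace_mul_cycle]
      have hU : (star (hX.eigenvectorUnitary : Matrix (Fin 2) (Fin 2) ℂ)) *
          (hX.eigenvectorUnitary : Matrix (Fin 2) (Fin 2) ℂ) = 1 :=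
        Matrix.mem_unitaryGroup_iff'.mp (hX.eigenvectorUnitary).2
      rw [hU, Matrix.one_mul, Matrix.trace_diagonal]
      rfl
    rw [htrX, Fin.sum_univ_two] at h1
    try simp only [hRC] at h1
    exact_mod_cast h1.symm
  have hXprod : hX.eigenvalues 0 * hX.eigenvalues 1 = x00 * x11 - ‖x01‖ ^ 2 := by
    have h1 := hX.det_eq_prod_eigenvalues
    rw [hdetX, Fin.prod_univ_two] at h1
    try simp only [hRC] at h1
    exact_mod_cast h1.symm
  constructor
  · rw [key, Multiset.filter_add, Multiset.filter_add, hfA, hfB, add_zero, add_zero]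
  · constructor
    · intro hpsd
      -- X is a principal submatrix of PT ρ
      have hXsub : X = (PT ρ).submatrix (fun i : Fin 2 => splitIdx d hd (Sum.inl i))
          (fun i : Fin 2 => splitIdx d hd (Sum.inl i)) := by
        ext i j
        rw [hXdef, hρdef]
        have h := congrFun (congrFun hblock (Sum.inl i)) (Sum.inl j)
        simpa using h.symm
      have hXpsd : X.PosSemidef := by
        rw [hXsub]; exact hpsd.submatrix _
      have h0 := hXpsd.eigenvalues_nonneg 0
      have h1 := hXpsd.eigenvalues_nonneg 1
      nlinarith [hXprod, mul_nonneg h0 h1]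
    · intro hineq
      have hXeig : ∀ j : Fin 2, 0 ≤ hX.eigenvalues j := by
        have hs : 0 ≤ hX.eigenvalues 0 + hX.eigenvalues 1 := by rw [hXsum]; linarith
        have hp : 0 ≤ hX.eigenvalues 0 * hX.eigenvalues 1 := by rw [hXprod]; linarith
        have h0 : 0 ≤ hX.eigenvalues 0 := by nlinarith [hs, hp]
        have h1 : 0 ≤ hX.eigenvalues 1 := by nlinarith [hs, hp]
        intro j
        fin_cases j
        · exact h0
        · exact h1
      apply hΓ.posSemidef_iff_eigenvalues_nonneg.mpr
      intro i
      have hmem : hΓ.eigenvalues i ∈ Finset.univ.val.map hΓ.eigenvalues :=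
        Multiset.mem_map.mpr ⟨i, by simp, rfl⟩
      rw [key] at hmem
      rcases Multiset.mem_add.mp hmem with h | h
      · obtain ⟨j, _, hj⟩ := Multiset.mem_map.mp h
        rw [← hj]; exact hXeig j
      · rcases Multiset.mem_add.mp h with h' | h'
        · obtain ⟨j, _, hj⟩ := Multiset.mem_map.mp h'
          rw [← hj]; exact hA'psd.eigenvalues_nonneg j
        · obtain ⟨j, _, hj⟩ := Multiset.mem_map.mp h'
          rw [← hj]; exact hB'psd.eigenvalues_nonneg j
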